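/- Let X be a δ-hyperbolic geodesic metric space and g an isometry of X. Then the stable norm N(g) = lim_{n→∞} d(o, gⁿ(o))/n satisfies N(g) ≤ l(g) ≤ N(g) + 16δ, where l(g) = inf_{x∈X} d(x, g(x)) is the translation length. -/

import Mathlib

open Filter Topology

private lemma chain_aux {X : Type*} [MetricSpace X] (δ K a : ℝ) (hδ : 0 ≤ δ)
    (hhyp : ∀ w x y z : X,
      min ((dist x w + dist y w - dist x y) / 2) ((dist y w + dist z w - dist y z) / 2) - δ ≤
        (dist x w + dist z w - dist x z) / 2)
    (x : ℕ → X)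
    (hd : ∀ i, dist (x i) (x (i + 1)) = a)
    (hgp : ∀ i, (dist (x i) (x (i + 1)) + dist (x (i + 2)) (x (i + 1))
        - dist (x i) (x (i + 2))) / 2 = K)
    (ha : 2 * K + 2 * δ < a) :
    ∀ n : ℕ,
      (dist (x 0) (x (n + 1)) + dist (x (n + 2)) (x (n + 1)) - dist (x 0) (x (n + 2))) / 2
          ≤ K + δ ∧
        a + n * (a - 2 * K - 2 * δ) ≤ dist (x 0) (x (n + 1)) := by
  intro n
  induction n with
  | zero =>
    constructor
    · have := hgp 0; linarith
    · have := hd 0; push_cast; linarith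
  | succ n ih =>
    obtain ⟨ih1, ih2⟩ := ih
    simp only [show n + 1 + 1 = n + 2 from rfl, show n + 1 + 2 = n + 3 from rfl]
    have e1 : dist (x (n + 1)) (x (n + 2)) = a := hd (n + 1)
    have e2 : dist (x (n + 2)) (x (n + 3)) = a := hd (n + 2)
    have g2 : (dist (x (n + 1)) (x (n + 2)) + dist (x (n + 3)) (x (n + 2))
        - dist (x (n + 1)) (x (n + 3))) / 2 = K := hgp (n + 1)
    have hminh := hhyp (x (n + 2)) (x (n + 3)) (x 0) (x (n + 1))
    have c1 : dist (x (n + 3)) (x 0) = dist (x 0) (x (n + 3)) := dist_comm _ _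
    have c2 : dist (x (n + 1)) (x (n + 2)) = dist (x (n + 2)) (x (n + 1)) := dist_comm _ _
    have c3 : dist (x (n + 3)) (x (n + 1)) = dist (x (n + 1)) (x (n + 3)) := dist_comm _ _
    have c4 : dist (x (n + 3)) (x (n + 2)) = dist (x (n + 2)) (x (n + 3)) := dist_comm _ _
    constructor
    · rcases min_cases ((dist (x (n + 3)) (x (n + 2)) + dist (x 0) (x (n + 2))
          - dist (x (n + 3)) (x 0)) / 2)
          ((dist (x 0) (x (n + 2)) + dist (x (n + 1)) (x (n + 2))
          - dist (x 0) (x (n + 1))) / 2) with ⟨he, -⟩ | ⟨he, -⟩ <;> rw [he] at hminh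
      · linarith
      · linarith
    · push_cast
      nlinarith [ih1, ih2, e1, c2]

/-- In a `δ`-hyperbolic geodesic metric space, the stable norm
`N(g) = lim dist o (gⁿ o) / n` of an isometry `g` and the translation length
`l(g) = ⨅ x, dist x (g x)` satisfy `N(g) ≤ l(g) ≤ N(g) + 16δ`. -/
theorem stable_norm_le_translation_length_le {X : Type*} [MetricSpace X]
    (δ : ℝ) (hδ : 0 ≤ δ)
    (hhyp : ∀ w x y z : X,
      min ((dist x w + dist y w - dist x y) / 2) ((dist y w + dist z w - dist y z) / 2) - δ ≤
        (dist x w + dist z w - dist x z) / 2)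
    (hgeo : ∀ x y : X, ∃ f : ℝ → X, f 0 = x ∧ f (dist x y) = y ∧
      ∀ s ∈ Set.Icc (0 : ℝ) (dist x y), ∀ t ∈ Set.Icc (0 : ℝ) (dist x y),
        dist (f s) (f t) = |s - t|)
    (g : X → X) (hg : Isometry g) (hgsurj : Function.Surjective g)
    (o : X) (N : ℝ)
    (hN : Tendsto (fun n : ℕ => dist o (g^[n] o) / n) atTop (𝓝 N)) :
    N ≤ (⨅ x : X, dist x (g x)) ∧ (⨅ x : X, dist x (g x)) ≤ N + 16 * δ := by
  have hne : Nonempty X := ⟨o⟩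
  have hbdd : BddBelow (Set.range fun x : X => dist x (g x)) :=
    ⟨0, by rintro _ ⟨y, rfl⟩; exact dist_nonneg⟩
  have hgi : ∀ n : ℕ, Isometry (g^[n]) := by
    intro n
    induction n with
    | zero => simpa using isometry_id
    | succ n ih => rw [Function.iterate_succ]; exact ih.comp hg
  have hN0 : 0 ≤ N := ge_of_tendsto' hN fun n => by positivity
  -- Part 1 : `N ≤ dist x (g x)` for every `x`.
  have part1 : ∀ x : X, N ≤ dist x (g x) := by
    intro x
    have hiter : ∀ n : ℕ, dist x (g^[n] x) ≤ n * dist x (g x) := by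
      intro n
      induction n with
      | zero => simp
      | succ n ih =>
        have h1 : dist (g x) (g^[n + 1] x) = dist x (g^[n] x) := by
          rw [Function.iterate_succ_apply']; exact hg.dist_eq x (g^[n] x)
        have h2 := dist_triangle x (g x) (g^[n + 1] x)
        push_cast
        linarith
    have hle : ∀ n : ℕ, dist o (g^[n] o) / n ≤ dist x (g x) + 2 * dist o x / n := by
      intro n
      rcases Nat.eq_zero_or_pos n with rfl | hn
      · simp [dist_nonneg]
      · have hn' : (0 : ℝ) < n := by exact_mod_cast hn
        have hnum : dist o (g^[n] o) ≤ n * dist x (g x) + 2 * dist o x := by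
          have t1 := dist_triangle o x (g^[n] o)
          have t2 := dist_triangle x (g^[n] x) (g^[n] o)
          have t3 : dist (g^[n] x) (g^[n] o) = dist x o := (hgi n).dist_eq x o
          have t4 := dist_comm x o
          have := hiter n
          linarith
        rw [div_le_iff₀ hn']
        have he : (dist x (g x) + 2 * dist o x / n) * n
            = n * dist x (g x) + 2 * dist o x := by field_simp
        rw [he]; exact hnum
    have hT : Tendsto (fun n : ℕ => dist x (g x) + 2 * dist o x / n) atTop
        (𝓝 (dist x (g x) + 0)) :=
      tendsto_const_nhds.add (tendsto_const_div_atTop_nhds_zero_nat _)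
    rw [add_zero] at hT
    exact le_of_tendsto_of_tendsto' hN hT hle
  refine ⟨le_ciInf part1, le_of_forall_pos_le_add ?_⟩
  -- Part 2 : `l ≤ N + 16δ + ε` for every `ε > 0`.
  intro ε hε
  set l := ⨅ x : X, dist x (g x) with hldef
  have hlmem : ∀ y : X, l ≤ dist y (g y) := fun y => ciInf_le hbdd y
  obtain ⟨x, hx⟩ : ∃ x : X, dist x (g x) < l + ε / 4 :=
    exists_lt_of_ciInf_lt (lt_add_of_pos_right l (by linarith : (0:ℝ) < ε/4))
  set a := dist x (g x) with hadef
  have ha0 : 0 ≤ a := dist_nonneg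
  have hla : l ≤ a := hlmem x
  have hdgx : dist (g x) x = a := by rw [dist_comm]
  obtain ⟨f, hf0, hf1, hfd⟩ := hgeo (g x) x
  have hmem : a / 2 ∈ Set.Icc (0 : ℝ) (dist (g x) x) := by
    rw [hdgx]; exact ⟨by linarith, by linarith⟩
  have hm1 : dist (f (a / 2)) (g x) = a / 2 := by
    have h := hfd (a / 2) hmem 0 ⟨le_refl 0, dist_nonneg⟩
    rw [hf0] at h
    rw [h, sub_zero, abs_of_nonneg (by linarith : (0:ℝ) ≤ a / 2)]
  have hm0 : dist (f (a / 2)) x = a / 2 := by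
    have h := hfd (a / 2) hmem (dist (g x) x) ⟨dist_nonneg, le_refl _⟩
    rw [hf1] at h
    rw [h, hdgx, abs_of_nonpos (by linarith : a / 2 - a ≤ 0)]
    ring
  have hq1 : dist (g (f (a / 2))) (g x) = a / 2 := by rw [hg.dist_eq]; exact hm0
  have hq2 : dist (g (f (a / 2))) (g (g x)) = a / 2 := by rw [hg.dist_eq]; exact hm1
  have hq2c : dist (g (g x)) (g (f (a / 2))) = a / 2 := by rw [dist_comm]; exact hq2
  have h2a : dist (g (g x)) (g x) = a := by
    rw [hg.dist_eq, dist_comm]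
  set K := (a + dist (g (g x)) (g x) - dist x (g (g x))) / 2 with hKdef
  have hK0 : 0 ≤ K := by
    have t := dist_triangle x (g x) (g (g x))
    have c := dist_comm (g x) (g (g x))
    rw [hKdef]; linarith [hadef.le, hadef.ge]
  have t1 := hhyp (g x) (f (a / 2)) x (g (f (a / 2)))
  have t2 := hhyp (g x) x (g (g x)) (g (f (a / 2)))
  have hlq := hlmem (f (a / 2))
  have hcases : a / 2 ≤ 2 * δ + ε / 8 ∨ K ≤ 2 * δ + ε / 8 := by
    rcases min_cases ((dist (f (a / 2)) (g x) + dist x (g x) - dist (f (a / 2)) x) / 2)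
        ((dist x (g x) + dist (g (f (a / 2))) (g x) - dist x (g (f (a / 2)))) / 2)
        with ⟨he1, -⟩ | ⟨he1, -⟩ <;> rw [he1] at t1
    · left; linarith [hadef.le, hadef.ge]
    · rcases min_cases ((dist x (g x) + dist (g (g x)) (g x) - dist x (g (g x))) / 2)
          ((dist (g (g x)) (g x) + dist (g (f (a / 2))) (g x)
            - dist (g (g x)) (g (f (a / 2)))) / 2)
          with ⟨he2, -⟩ | ⟨he2, -⟩ <;> rw [he2] at t2
      · right; linarith [hadef.le, hadef.ge, hKdef.le, hKdef.ge]
      · left; linarith [hadef.le, hadef.ge]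
  rcases hcases with hsm | hKsm
  · linarith
  · rcases le_or_gt a (2 * K + 2 * δ) with hc | hc
    · linarith
    · have hit1 : ∀ i : ℕ, g^[i + 1] x = g^[i] (g x) := fun i =>
        Function.iterate_succ_apply g i x
      have hit2 : ∀ i : ℕ, g^[i + 2] x = g^[i] (g (g x)) := by
        intro i
        rw [Function.iterate_add_apply]
        rfl
      have hd' : ∀ i : ℕ, dist (g^[i] x) (g^[i + 1] x) = a := by
        intro i
        rw [hit1 i, (hgi i).dist_eq]
      have hgp' : ∀ i : ℕ, (dist (g^[i] x) (g^[i + 1] x) + dist (g^[i + 2] x) (g^[i + 1] x)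
          - dist (g^[i] x) (g^[i + 2] x)) / 2 = K := by
        intro i
        rw [hit1 i, hit2 i]
        simp only [(hgi i).dist_eq]
        rfl
      have hchain := chain_aux δ K a hδ hhyp (fun i => g^[i] x) hd' hgp' hc
      simp only [Function.iterate_zero_apply] at hchain
      have hNlb : a - 2 * K - 2 * δ ≤ N := by
        have hev : ∀ᶠ n : ℕ in atTop,
            (a - 2 * K - 2 * δ) - 2 * dist o x / n ≤ dist o (g^[n] o) / n := by
          filter_upwards [eventually_ge_atTop 1] with n hn
          have hn' : (0 : ℝ) < n := by exact_mod_cast hn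
          have h1 : (n : ℝ) * (a - 2 * K - 2 * δ) ≤ dist x (g^[n] x) := by
            obtain ⟨m, rfl⟩ : ∃ m, n = m + 1 := ⟨n - 1, by omega⟩
            have := (hchain m).2
            push_cast
            nlinarith [hK0, hδ]
          have h2 : dist x (g^[n] x) ≤ dist o (g^[n] o) + 2 * dist o x := by
            have u1 := dist_triangle x o (g^[n] x)
            have u2 := dist_triangle o (g^[n] o) (g^[n] x)
            have u3 : dist (g^[n] o) (g^[n] x) = dist o x := (hgi n).dist_eq o x
            have u4 := dist_comm x o
            linarith
          rw [le_div_iff₀ hn']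
          have he : ((a - 2 * K - 2 * δ) - 2 * dist o x / n) * n
              = n * (a - 2 * K - 2 * δ) - 2 * dist o x := by field_simp
          rw [he]; linarith
        have hT : Tendsto (fun n : ℕ => (a - 2 * K - 2 * δ) - 2 * dist o x / n) atTop
            (𝓝 ((a - 2 * K - 2 * δ) - 0)) :=
          tendsto_const_nhds.sub (tendsto_const_div_atTop_nhds_zero_nat _)
        rw [sub_zero] at hT
        exact le_of_tendsto_of_tendsto hT hN hev
      linarith
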